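/- Let b = 0 or 1 and fix a contraction γ : G → H = G/S₀. Let S ∈ A^b_G and T ∈ A^b_H. Then: (a) γ_* γ* T = T; (b) T ⊆ γ_* S if and only if γ* T ⊆ S; (c) γ* T is the smallest (with respect to inclusion) element of A^b_G whose image under γ_* equals T; (d) γ_* : A^b_G → A^b_H is a quotient of posets; (e) if S₀ ⊆ G_br then γ_* : A^b_G → A^b_H is an isomorphism of posets. -/

import Mathlib

/-!
Common framework: finite vertex-weighted multigraphs (loops and multiple edges
allowed), generalized orientations, divisors, contractions, and poset gadgets.

A graph is encoded by a finite set `V ⊆ ℕ` of vertices, a finite set `E ⊆ ℕ`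
of edges, an "ends" function assigning to each edge its ordered pair of
end-vertices (the two components encode the two half-edges), and a weight
function `w : ℕ → ℕ`.

A generalized orientation is a function `ℕ → Option EdgeDir`, where `none`
means the edge is absent (an orientation on a spanning subgraph `G − S` takes
the value `none` exactly on edges outside `E \ S`), `fwd`/`bwd` give the edge a
single direction, and `bi` makes the edge bioriented.
-/

open scoped Classical
open Finset

/-- Direction of an edge under a generalized orientation. -/
inductive EdgeDir : Type
  | fwd
  | bwd
  | bi
deriving DecidableEq

/-- Generalized orientation data. -/
abbrev Orient : Type := ℕ → Option EdgeDir

/-- The number of ending (target) half-edges at the vertex `v` of an edge with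
end-pair `p`, given its direction `d`.  A one-way oriented edge has exactly
one target end; a bioriented edge has both ends as targets. -/
def dirT : Option EdgeDir → ℕ × ℕ → ℕ → ℕ
  | none, _, _ => 0
  | some EdgeDir.fwd, p, v => if p.2 = v then 1 else 0
  | some EdgeDir.bwd, p, v => if p.1 = v then 1 else 0
  | some EdgeDir.bi, p, v => (if p.1 = v then 1 else 0) + (if p.2 = v then 1 else 0)

/-- Restriction of orientation data to the set `D` of kept edges. -/
def restr (O : Orient) (D : Finset ℕ) : Orient := fun e => if e ∈ D then O e else none

/-- A finite vertex-weighted multigraph. -/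
structure WGraph : Type where
  V : Finset ℕ
  E : Finset ℕ
  ends : ℕ → ℕ × ℕ
  w : ℕ → ℕ
  ends_mem : ∀ e ∈ E, (ends e).1 ∈ V ∧ (ends e).2 ∈ V

namespace WGraph

variable (G : WGraph)

/-- Edge set of the induced subgraph `(G−S)[Z]`: edges of `G − S` with both
ends in `Z`. -/
def indEdges (S Z : Finset ℕ) : Finset ℕ :=
  (G.E \ S).filter fun e => (G.ends e).1 ∈ Z ∧ (G.ends e).2 ∈ Z

/-- The cut `E(Z, Zᶜ)` in `G − S`: edges of `G − S` with exactly one end in `Z`. -/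
def cutEdges (S Z : Finset ℕ) : Finset ℕ :=
  (G.E \ S).filter fun e =>
    ((G.ends e).1 ∈ Z ∧ (G.ends e).2 ∉ Z) ∨ ((G.ends e).1 ∉ Z ∧ (G.ends e).2 ∈ Z)

/-- Adjacency via an edge belonging to `F ∩ E`. -/
def adjOn (F : Finset ℕ) (u v : ℕ) : Prop :=
  ∃ e ∈ F ∩ G.E, G.ends e = (u, v) ∨ G.ends e = (v, u)

/-- Number of connected components of the subgraph with vertex set `W` and
edge set `F`. -/
noncomputable def ncomp (W F : Finset ℕ) : ℕ :=
  Nat.card (Quot (fun u v : {x : ℕ // x ∈ W} => G.adjOn F u.1 v.1))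

/-- The subgraph with vertex set `W` and edge set `F` is connected. -/
def ConnSub (W F : Finset ℕ) : Prop := G.ncomp W F = 1

/-- `G` is connected. -/
def Connected : Prop := G.ConnSub G.V G.E

/-- Genus of the subgraph with vertex set `W` and edge set `F`:
`∑_{v ∈ W} w(v) − |W| + |F| + c`. -/
noncomputable def subGenus (W F : Finset ℕ) : ℤ :=
  (∑ v ∈ W, (G.w v : ℤ)) - (W.card : ℤ) + (((F ∩ G.E).card : ℤ)) + (G.ncomp W F : ℤ)

/-- The genus of `G`. -/
noncomputable def genus : ℤ := G.subGenus G.V G.E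

/-- The degree of a vertex: the number of half-edges having `v` as end. -/
def deg (v : ℕ) : ℕ :=
  ∑ e ∈ G.E, ((if (G.ends e).1 = v then 1 else 0) + (if (G.ends e).2 = v then 1 else 0))

/-- `e` is a bridge of `G − S`: removing it increases the number of connected
components. -/
def IsBridge (S : Finset ℕ) (e : ℕ) : Prop :=
  e ∈ G.E \ S ∧ G.ncomp G.V (G.E \ S) < G.ncomp G.V (G.E \ insert e S)

/-- The set of bridges of `G − S`. -/
noncomputable def bridges (S : Finset ℕ) : Finset ℕ := (G.E \ S).filter (G.IsBridge S)

/-- `T` is a cut of `G`, i.e. `T = E(Z, Zᶜ)` for some `∅ ⊊ Z ⊊ V`. -/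
def IsCut (T : Finset ℕ) : Prop :=
  ∃ Z, Z ⊆ G.V ∧ Z.Nonempty ∧ Z ≠ G.V ∧ T = G.cutEdges ∅ Z

/-- `W` is (the vertex set of) a connected component of `G − S`. -/
def IsCompOf (S W : Finset ℕ) : Prop :=
  W ⊆ G.V ∧ W.Nonempty ∧ G.ConnSub W (G.indEdges S W) ∧ G.cutEdges S W = ∅

/-- The poset `A^b_G`: for `b = 0` the sets `S ⊆ E` with `G − S` bridgeless,
for `b = 1` the sets `S ⊆ E` with `G − S` connected. -/
def Ab (b : ℕ) (S : Finset ℕ) : Prop :=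
  S ⊆ G.E ∧ ((b = 0 ∧ ∀ e, ¬ G.IsBridge S e) ∨ (b = 1 ∧ G.ConnSub G.V (G.E \ S)))

/-- `G` is a stable graph of genus `g`: connected, of genus `g`, and every
vertex of weight `0` has degree at least `3`. -/
noncomputable def Stable (g : ℕ) : Prop :=
  G.Connected ∧ G.genus = (g : ℤ) ∧ ∀ v ∈ G.V, G.w v = 0 → 3 ≤ G.deg v

/-! ### Generalized orientations on spanning subgraphs -/

/-- `O` is orientation data for the spanning subgraph `G − S` (it is defined
exactly on the edges of `G − S`). -/
def IsOrientOn (S : Finset ℕ) (O : Orient) : Prop :=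
  ∀ e, O e ≠ none ↔ e ∈ G.E \ S

/-- The set of bioriented edges of `O`. -/
def biE (O : Orient) : Finset ℕ := G.E.filter fun e => O e = some EdgeDir.bi

/-- `t^O_v`: the number of half-edges having `v` as target. -/
def tOr (O : Orient) (v : ℕ) : ℕ := ∑ e ∈ G.E, dirT (O e) (G.ends e) v

/-- `t^O(Z)`: the number of edges of `G − S` not contained in `(G−S)[Z]`
having a target in `Z`. -/
def tCut (S : Finset ℕ) (O : Orient) (Z : Finset ℕ) : ℕ :=
  ∑ e ∈ (G.E \ S) \ G.indEdges S Z, ∑ v ∈ Z, dirT (O e) (G.ends e) v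

/-- The divisor `d^O` of a `b`-orientation `O` on `G − S`:
`d^O_v = w(v) − 1 + t^O_v` if `G − S` has edges, and `d^O_v = w(v) − 1 + b`
otherwise; it is supported on `V`. -/
noncomputable def divOr (S : Finset ℕ) (b : ℕ) (O : Orient) : ℕ → ℤ :=
  fun v => if v ∈ G.V then
      (if G.E \ S = ∅ then (G.w v : ℤ) - 1 + (b : ℤ) else (G.w v : ℤ) - 1 + (G.tOr O v : ℤ))
    else 0

/-- Equivalence of generalized orientations on `G − S`:  both are orientations
on `G − S` and they have the same divisor. -/
noncomputable def equivOr (S : Finset ℕ) (b : ℕ) (O O' : Orient) : Prop :=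
  G.IsOrientOn S O ∧ G.IsOrientOn S O' ∧ G.divOr S b O = G.divOr S b O'

/-- `O` is a totally cyclic orientation on `G − S`: every nonempty cut
`E(Z,Zᶜ)` contains an edge with target in `Z` and an edge with target in `Zᶜ`. -/
def TotCyc (S : Finset ℕ) (O : Orient) : Prop :=
  ∀ Z : Finset ℕ, Z ⊆ G.V → Z.Nonempty → Z ≠ G.V → (G.cutEdges S Z).Nonempty →
    (∃ e ∈ G.cutEdges S Z, ∃ v ∈ Z, 0 < dirT (O e) (G.ends e) v) ∧
    (∃ e ∈ G.cutEdges S Z, ∃ v ∈ G.V \ Z, 0 < dirT (O e) (G.ends e) v)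

/-- `O` is `e₀`-rooted on `G − S`: for every `Z ⊊ V` with `e₀` an edge of
`(G−S)[Z]`, the cut `E(Z,Zᶜ)` contains an edge with target in `Zᶜ`. -/
def RootedAt (S : Finset ℕ) (O : Orient) (e₀ : ℕ) : Prop :=
  ∀ Z : Finset ℕ, Z ⊆ G.V → Z ≠ G.V → e₀ ∈ G.indEdges S Z →
    ∃ e ∈ G.cutEdges S Z, ∃ v ∈ G.V \ Z, 0 < dirT (O e) (G.ends e) v

/-- `O` is a rooted `1`-orientation on `G − S`:  it has exactly one bioriented
edge, at which it is rooted.  By convention, if `G − S` consists of a single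
vertex (and no edges), the empty orientation is rooted. -/
def Rooted1 (S : Finset ℕ) (O : Orient) : Prop :=
  (∃ e₀, G.biE O = {e₀} ∧ G.RootedAt S O e₀) ∨ (G.E \ S = ∅ ∧ G.V.card = 1)

/-- `O ∈ 𝒪^b(G−S)`:  for `b = 0`, a totally cyclic orientation on `G − S`;
for `b = 1`, a rooted `1`-orientation on `G − S`. -/
def MemOb (S : Finset ℕ) (b : ℕ) (O : Orient) : Prop :=
  G.IsOrientOn S O ∧
    ((b = 0 ∧ G.biE O = ∅ ∧ G.TotCyc S O) ∨ (b = 1 ∧ G.Rooted1 S O))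

/-- `O` is a `b`-orientation on `G − S` (exactly `b` bioriented edges; by
convention the empty orientation on a one-vertex edgeless graph counts as a
`1`-orientation). -/
def IsbOr (S : Finset ℕ) (b : ℕ) (O : Orient) : Prop :=
  G.IsOrientOn S O ∧
    ((G.biE O).card = b ∨ (G.E \ S = ∅ ∧ G.V.card = 1 ∧ b = 1))

/-! ### Posets of orientations on spanning subgraphs -/

/-- The order of `𝒪𝒫^b_G` on pairs `(S, O_S)`:  `(S,O_S) ≤ (T,O_T)` iff
`T ⊆ S` and the restriction of `O_T` to `G − S` is `O_S`. -/
def leOP (p q : Finset ℕ × Orient) : Prop :=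
  q.1 ⊆ p.1 ∧ restr q.2 (G.E \ p.1) = p.2

/-- The order of `𝒪̄𝒫^b_G` on pairs (representing classes): `(S,O̅_S) ≤ (T,O̅_T)`
iff `T ⊆ S` and some representative of `O̅_T` restricts on `G − S` to some
representative of `O̅_S`. -/
noncomputable def leOPbar (b : ℕ) (p q : Finset ℕ × Orient) : Prop :=
  q.1 ⊆ p.1 ∧ ∃ O', G.equivOr q.1 b O' q.2 ∧
    G.equivOr p.1 b (restr O' (G.E \ p.1)) p.2

/-- Equality in `𝒪̄𝒫^b_G`: same subgraph and equivalent orientations. -/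
noncomputable def eqOP (b : ℕ) (p q : Finset ℕ × Orient) : Prop :=
  p.1 = q.1 ∧ G.equivOr p.1 b p.2 q.2

/-- Membership in `𝒪𝒫^b_G`. -/
def POb (b : ℕ) (p : Finset ℕ × Orient) : Prop :=
  G.Ab b p.1 ∧ G.MemOb p.1 b p.2

/-! ### Stable divisors -/

/-- Stable divisors on `G − S` of degree `g(G−S) − c(G−S) + b` (`b = 0, 1`):
for `b = 1`, `G − S` is connected, the degree is `g(G−S)` and
`|d_Z| > g(Z) − 1` for every `Z ⊆ V`; for `b = 0`, the restriction of `d` to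
every connected component `W` of `G − S` has degree `g(W) − 1` and satisfies
`|d_Z| > g(Z) − 1` for every `∅ ≠ Z ⊊ W`. -/
noncomputable def StableDiv (S : Finset ℕ) (b : ℕ) (d : ℕ → ℤ) : Prop :=
  (∀ v, v ∉ G.V → d v = 0) ∧
  ((b = 1 ∧ G.ConnSub G.V (G.E \ S) ∧
      (∑ v ∈ G.V, d v) = G.subGenus G.V (G.E \ S) ∧
      ∀ Z ⊆ G.V, G.subGenus Z (G.indEdges S Z) - 1 < ∑ v ∈ Z, d v) ∨
   (b = 0 ∧ ∀ W, G.IsCompOf S W →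
      (∑ v ∈ W, d v) = G.subGenus W (G.indEdges S W) - 1 ∧
      ∀ Z ⊆ W, Z.Nonempty → Z ≠ W →
        G.subGenus Z (G.indEdges S Z) - 1 < ∑ v ∈ Z, d v))

/-! ### Contractions -/

/-- The relation identifying the two ends of each edge in `S₀`. -/
def conRel (S₀ : Finset ℕ) (u v : ℕ) : Prop :=
  ∃ e ∈ S₀ ∩ G.E, G.ends e = (u, v) ∨ G.ends e = (v, u)

/-- Representative (the least element) of the class of `v` under the
equivalence generated by identifying the ends of the edges in `S₀`. -/
noncomputable def crep (S₀ : Finset ℕ) (v : ℕ) : ℕ :=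
  sInf {u | Relation.EqvGen (G.conRel S₀) u v}

/-- The (weighted) edge contraction `G/S₀`: every connected component of the
subgraph spanned by `S₀` is contracted to a single vertex, whose weight is the
genus of that component; `E(G/S₀) = E(G) \ S₀`. -/
noncomputable def contract (S₀ : Finset ℕ) : WGraph where
  V := G.V.image (G.crep S₀)
  E := G.E \ S₀
  ends := fun e => (G.crep S₀ (G.ends e).1, G.crep S₀ (G.ends e).2)
  w := fun v =>
    (G.subGenus (G.V.filter fun u => G.crep S₀ u = v)
      (G.indEdges (G.E \ S₀) (G.V.filter fun u => G.crep S₀ u = v))).toNat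
  ends_mem := by
    intro e he
    rw [Finset.mem_sdiff] at he
    exact ⟨Finset.mem_image_of_mem _ (G.ends_mem e he.1).1,
           Finset.mem_image_of_mem _ (G.ends_mem e he.1).2⟩

/-- Deletion of the edges in `T` (a spanning subgraph, as a graph). -/
def ddel (T : Finset ℕ) : WGraph where
  V := G.V
  E := G.E \ T
  ends := G.ends
  w := G.w
  ends_mem := fun e he => G.ends_mem e (Finset.mem_sdiff.mp he).1

/-- Pullback `γ* T` of an edge set along the contraction `γ : G → G/S₀`:
`T ∪ (G−T)_br` for `b = 0`, and `T` for `b = 1`. -/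
noncomputable def pullStar (b : ℕ) (T : Finset ℕ) : Finset ℕ :=
  if b = 0 then T ∪ G.bridges T else T

/-- Pushforward of a divisor along the contraction `γ : G → G/S₀`:
`(γ_* d)_v = ∑_{z ∈ γ⁻¹(v)} d_z`. -/
noncomputable def pushDiv (S₀ : Finset ℕ) (d : ℕ → ℤ) : ℕ → ℤ :=
  fun v => ∑ z ∈ G.V.filter (fun u => G.crep S₀ u = v), d z

/-- The divisor `c^{γ,S}` on `G/S₀`: `c^{γ,S}_v = #{e ∈ S₀ ∩ S : γ(e) = v}`. -/
noncomputable def cGamma (S₀ S : Finset ℕ) : ℕ → ℤ :=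
  fun v => ((((S₀ ∩ S) ∩ G.E).filter (fun e => G.crep S₀ (G.ends e).1 = v)).card : ℤ)

/-- The relation "`q` is a value of `γ̄_*` at `p`" for the contraction
`γ : G → G/S₀` acting on classes of orientations: `q` is the restriction to
`(G/S₀) − γ_* S` of a representative of the class of `p` having no bioriented
edge in `S₀` (when `(G/S₀) − γ_*S` has no edges, any representative serves). -/
noncomputable def pushRel (S₀ : Finset ℕ) (b : ℕ) (p q : Finset ℕ × Orient) : Prop :=
  ∃ O', G.equivOr p.1 b O' p.2 ∧
    ((∀ e ∈ S₀, O' e ≠ some EdgeDir.bi) ∨ G.E \ (S₀ ∪ p.1) = ∅) ∧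
    q.1 = p.1 \ S₀ ∧ q.2 = restr O' (G.E \ (S₀ ∪ p.1))

/-! ### Isomorphisms and directed reachability -/

/-- `(fV, fE)` is an isomorphism from `G` to `H`. -/
def IsoMaps (H : WGraph) (fV fE : ℕ → ℕ) : Prop :=
  Set.BijOn fV ↑G.V ↑H.V ∧ Set.BijOn fE ↑G.E ↑H.E ∧
  (∀ e ∈ G.E, H.ends (fE e) = (fV (G.ends e).1, fV (G.ends e).2) ∨
              H.ends (fE e) = (fV (G.ends e).2, fV (G.ends e).1)) ∧
  (∀ v ∈ G.V, H.w (fV v) = G.w v)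

/-- `G` and `H` are isomorphic graphs. -/
def Iso (H : WGraph) : Prop := ∃ fV fE, G.IsoMaps H fV fE

/-- The edge-contraction relation: `G ≤ H` iff `H = G/S₀` (up to isomorphism)
for some `S₀ ⊆ E(G)`. -/
noncomputable def contractLE (H : WGraph) : Prop :=
  ∃ S₀ ⊆ G.E, (G.contract S₀).Iso H

/-- One step from `u` to `v` along an `O`-directed edge (a bioriented edge may
be traversed in both directions). -/
def dirStep (O : Orient) (u v : ℕ) : Prop :=
  ∃ e ∈ G.E,
    (O e = some EdgeDir.fwd ∧ G.ends e = (u, v)) ∨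
    (O e = some EdgeDir.bwd ∧ G.ends e = (v, u)) ∨
    (O e = some EdgeDir.bi ∧ (G.ends e = (u, v) ∨ G.ends e = (v, u)))

/-- There is an `O`-directed path from the (bioriented) edge `e` to the
vertex `v`: a directed path starting at one of the ends of `e` and ending
at `v`. -/
def dirReachFromEdge (O : Orient) (e v : ℕ) : Prop :=
  ∃ u, ((G.ends e).1 = u ∨ (G.ends e).2 = u) ∧
    Relation.ReflTransGen (G.dirStep O) u v

end WGraph

/-! ### Generic poset gadgets (for sets with an order, modulo an equivalence) -/

/-- `le` is a partial order on `{a | P a}` modulo the identification `eqv`. -/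
def IsPartialOrderOnMod {α : Type*} (P : α → Prop) (eqv le : α → α → Prop) : Prop :=
  (∀ a, P a → le a a) ∧
  (∀ a b c, P a → P b → P c → le a b → le b c → le a c) ∧
  (∀ a b, P a → P b → le a b → le b a → eqv a b)

/-- `le` is a partial order on `{a | P a}`. -/
def IsPartialOrderOn {α : Type*} (P : α → Prop) (le : α → α → Prop) : Prop :=
  IsPartialOrderOnMod P (· = ·) le

/-- `a'` covers `a` in `{a | P a}` ordered by `le`, modulo `eqv`. -/
def CoversOnMod {α : Type*} (P : α → Prop) (eqv le : α → α → Prop) (a a' : α) : Prop :=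
  P a ∧ P a' ∧ le a a' ∧ ¬ eqv a a' ∧
    ∀ c, P c → le a c → le c a' → (eqv c a ∨ eqv c a')

/-- `ρ` is a rank on `{a | P a}` ordered by `le`, modulo `eqv`:  along every
covering relation it increases by exactly `1`. -/
def IsRankOnMod {α : Type*} (P : α → Prop) (eqv le : α → α → Prop) (ρ : α → ℕ) : Prop :=
  ∀ a a', CoversOnMod P eqv le a a' → ρ a' = ρ a + 1

/-- `a'` covers `a` in `{a | P a}` ordered by `le`. -/
def CoversOn {α : Type*} (P : α → Prop) (le : α → α → Prop) : α → α → Prop :=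
  CoversOnMod P (· = ·) le

/-- `ρ` is a rank on `{a | P a}` ordered by `le`. -/
def IsRankOn {α : Type*} (P : α → Prop) (le : α → α → Prop) (ρ : α → ℕ) : Prop :=
  IsRankOnMod P (· = ·) le ρ

/-- `f` is a quotient of posets from `({a | P a}, lea)` onto `({b | Q b}, leb)`:
an order-preserving surjection such that any relation downstairs lifts to a
relation upstairs. -/
def IsPosetQuotient {α β : Type*} (P : α → Prop) (Q : β → Prop)
    (lea : α → α → Prop) (leb : β → β → Prop) (f : α → β) : Prop :=
  (∀ a, P a → Q (f a)) ∧
  (∀ a a', P a → P a' → lea a a' → leb (f a) (f a')) ∧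
  (∀ b, Q b → ∃ a, P a ∧ f a = b) ∧
  (∀ b b', Q b → Q b' → leb b b' →
    ∃ a a', P a ∧ P a' ∧ f a = b ∧ f a' = b' ∧ lea a a')

/-! ### Structures over the moduli of stable graphs -/

/-- Pairs `(G, S)` with `G` stable of genus `g` and `S ∈ A^b_G`. -/
noncomputable def PairStab (g b : ℕ) (p : WGraph × Finset ℕ) : Prop :=
  p.1.Stable g ∧ p.1.Ab b p.2

/-- Isomorphism of pairs `(G, S)`. -/
def PairIso (p q : WGraph × Finset ℕ) : Prop :=
  ∃ fV fE, p.1.IsoMaps q.1 fV fE ∧ p.2.image fE = q.2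

/-- The order on `A^b_g`: `(G,S) ≤ (H,T)` iff there is a contraction
`γ : G → H` (a contraction of `G` followed by an isomorphism onto `H`) with
`γ* T ⊆ S`. -/
noncomputable def AgLE (b : ℕ) (p q : WGraph × Finset ℕ) : Prop :=
  ∃ S₀ ⊆ p.1.E, ∃ fV fE, (p.1.contract S₀).IsoMaps q.1 fV fE ∧
    p.1.pullStar b (((p.1.contract S₀).E).filter fun e => fE e ∈ q.2) ⊆ p.2

/-- Triples `(G, S, O̅_S)` with `G` stable of genus `g`, `S ∈ A^b_G` and
`O_S ∈ 𝒪^b(G−S)` (representing elements of `𝒪̄𝒫^b_g`). -/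
noncomputable def TripP (g b : ℕ) (x : WGraph × Finset ℕ × Orient) : Prop :=
  x.1.Stable g ∧ x.1.Ab b x.2.1 ∧ x.1.MemOb x.2.1 b x.2.2

/-- Identification of triples: an isomorphism of the underlying graphs
carrying the subgraph and the class of the orientation (i.e. its divisor) of
one to the other. -/
noncomputable def TripEq (b : ℕ) (x y : WGraph × Finset ℕ × Orient) : Prop :=
  ∃ fV fE, x.1.IsoMaps y.1 fV fE ∧ x.2.1.image fE = y.2.1 ∧
    ∀ v ∈ x.1.V, y.1.divOr y.2.1 b y.2.2 (fV v) = x.1.divOr x.2.1 b x.2.2 v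

/-- The order on `𝒪̄𝒫^b_g`: `(G, O̅_S) ≤ (H, O̅_T)` iff there is a contraction
`γ : G → H` with `γ* T ⊆ S` and `γ̄_* O̅_S ≤ O̅_T`, the latter meaning that the
restriction of `O̅_T` to `H − γ_* S` equals `γ̄_* O̅_S` (compared through the
isomorphism, via the divisors). -/
noncomputable def OPgLE (b : ℕ) (x y : WGraph × Finset ℕ × Orient) : Prop :=
  ∃ S₀ ⊆ x.1.E, ∃ fV fE, (x.1.contract S₀).IsoMaps y.1 fV fE ∧
    x.1.pullStar b (((x.1.contract S₀).E).filter fun e => fE e ∈ y.2.1) ⊆ x.2.1 ∧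
    ∃ O', x.1.equivOr x.2.1 b O' x.2.2 ∧
      ((∀ e ∈ S₀, O' e ≠ some EdgeDir.bi) ∨ x.1.E \ (S₀ ∪ x.2.1) = ∅) ∧
      ∀ v ∈ (x.1.contract S₀).V,
        y.1.divOr ((x.2.1 \ S₀).image fE) b
            (restr y.2.2 (y.1.E \ (x.2.1 \ S₀).image fE)) (fV v)
          = (x.1.contract S₀).divOr (x.2.1 \ S₀) b
              (restr O' (x.1.E \ (S₀ ∪ x.2.1))) v

namespace Pf

section QuotLemmas
variable {α : Type*}

lemma quot_card_le [Finite α] (r r' : α → α → Prop)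
    (h : ∀ a b, r' a b → Quot.mk r a = Quot.mk r b) :
    Nat.card (Quot r) ≤ Nat.card (Quot r') := by
  have hs : Function.Surjective (Quot.lift (Quot.mk r) h) := by
    intro q
    obtain ⟨a, rfl⟩ := Quot.exists_rep q
    exact ⟨Quot.mk r' a, rfl⟩
  exact Nat.card_le_card_of_surjective _ hs

lemma quot_card_eq (r r' : α → α → Prop)
    (h1 : ∀ a b, r a b → Quot.mk r' a = Quot.mk r' b)
    (h2 : ∀ a b, r' a b → Quot.mk r a = Quot.mk r b) :
    Nat.card (Quot r) = Nat.card (Quot r') :=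
  Nat.card_congr ⟨Quot.lift (Quot.mk r') h1, Quot.lift (Quot.mk r) h2,
    by intro q; induction q using Quot.ind; rfl,
    by intro q; induction q using Quot.ind; rfl⟩

lemma quot_card_lt [Finite α] (r r' : α → α → Prop)
    (h : ∀ a b, r' a b → Quot.mk r a = Quot.mk r b)
    (u v : α) (huv : Quot.mk r u = Quot.mk r v)
    (huv' : Quot.mk r' u ≠ Quot.mk r' v) :
    Nat.card (Quot r) < Nat.card (Quot r') := by
  refine lt_of_le_of_ne (quot_card_le r r' h) fun hcard => ?_
  have hs : Function.Surjective (Quot.lift (Quot.mk r) h) := by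
    intro q
    obtain ⟨a, rfl⟩ := Quot.exists_rep q
    exact ⟨Quot.mk r' a, rfl⟩
  have hbij : Function.Bijective (Quot.lift (Quot.mk r) h) :=
    (Nat.bijective_iff_surjective_and_card _).mpr ⟨hs, hcard.symm⟩
  exact huv' (hbij.injective (show Quot.mk r u = Quot.mk r v from huv))

end QuotLemmas

/-- Connectivity via edges in `F`. -/
def cn (G : WGraph) (F : Finset ℕ) : ℕ → ℕ → Prop := Relation.EqvGen (G.adjOn F)

/-- The relation whose quotient defines `ncomp`. -/
def R (G : WGraph) (W F : Finset ℕ) : {x : ℕ // x ∈ W} → {x : ℕ // x ∈ W} → Prop :=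
  fun u v => G.adjOn F u.1 v.1

variable (G : WGraph)

lemma ncomp_def (W F : Finset ℕ) : G.ncomp W F = Nat.card (Quot (R G W F)) := rfl

lemma adjOn_mem_V {F u v} (h : G.adjOn F u v) : u ∈ G.V ∧ v ∈ G.V := by
  obtain ⟨e, he, h⟩ := h
  have hm := G.ends_mem e (Finset.mem_inter.mp he).2
  rcases h with h | h <;> rw [h] at hm
  · exact hm
  · exact ⟨hm.2, hm.1⟩

lemma adjOn_symm {F u v} (h : G.adjOn F u v) : G.adjOn F v u := by
  obtain ⟨e, he, h⟩ := h
  exact ⟨e, he, h.symm⟩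

lemma cn_quot {F u v} (h : cn G F u v) :
    u = v ∨ (u ∈ G.V ∧ v ∈ G.V ∧ ∀ hu hv,
      Quot.mk (R G G.V F) ⟨u, hu⟩ = Quot.mk (R G G.V F) ⟨v, hv⟩) := by
  induction h with
  | rel a b hab =>
      have hm := adjOn_mem_V G hab
      exact Or.inr ⟨hm.1, hm.2, fun hu hv => Quot.sound hab⟩
  | refl a => exact Or.inl rfl
  | symm a b _ ih =>
      rcases ih with rfl | ⟨h1, h2, h3⟩
      · exact Or.inl rfl
      · exact Or.inr ⟨h2, h1, fun hu hv => (h3 hv hu).symm⟩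
  | trans a b c _ _ ih1 ih2 =>
      rcases ih1 with rfl | ⟨h1, h2, h3⟩
      · exact ih2
      · rcases ih2 with rfl | ⟨h1', h2', h3'⟩
        · exact Or.inr ⟨h1, h2, h3⟩
        · exact Or.inr ⟨h1, h2', fun hu hv => (h3 hu h2).trans (h3' h2 hv)⟩

lemma cn_iff {F u v} (hu : u ∈ G.V) (hv : v ∈ G.V) :
    cn G F u v ↔ Quot.mk (R G G.V F) ⟨u, hu⟩ = Quot.mk (R G G.V F) ⟨v, hv⟩ := by
  constructor
  · intro h
    rcases cn_quot G h with rfl | ⟨_, _, h3⟩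
    · rfl
    · exact h3 hu hv
  · intro h
    have hg := Quot.eq.mp h
    have key : ∀ (a b : {x : ℕ // x ∈ G.V}), Relation.EqvGen (R G G.V F) a b →
        cn G F a.1 b.1 := by
      intro a b hab
      induction hab with
      | rel a b hab => exact Relation.EqvGen.rel _ _ hab
      | refl a => exact Relation.EqvGen.refl _
      | symm a b _ ih => exact Relation.EqvGen.symm _ _ ih
      | trans a b c _ _ ih1 ih2 => exact Relation.EqvGen.trans _ _ _ ih1 ih2
    exact key _ _ hg

lemma cn_mono {F F'} (h : F ⊆ F') {u v} (hc : cn G F u v) : cn G F' u v := by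
  refine Relation.EqvGen.mono ?_ _ _ hc
  rintro a b ⟨e, he, hx⟩
  rw [Finset.mem_inter] at he
  exact ⟨e, Finset.mem_inter.mpr ⟨h he.1, he.2⟩, hx⟩

lemma adjOn_congr {F F'} (h : F ∩ G.E = F' ∩ G.E) : G.adjOn F = G.adjOn F' := by
  unfold WGraph.adjOn
  rw [h]

lemma ncomp_congr (W : Finset ℕ) {F F'} (h : F ∩ G.E = F' ∩ G.E) :
    G.ncomp W F = G.ncomp W F' := by
  unfold WGraph.ncomp
  rw [show (fun u v : {x : ℕ // x ∈ W} => G.adjOn F u.1 v.1)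
      = fun u v : {x : ℕ // x ∈ W} => G.adjOn F' u.1 v.1 by rw [adjOn_congr G h]]

lemma ncomp_mono (W : Finset ℕ) {F F'} (h : F ⊆ F') :
    G.ncomp W F' ≤ G.ncomp W F := by
  rw [ncomp_def, ncomp_def]
  refine quot_card_le _ _ fun a b hab => ?_
  refine Quot.sound ?_
  obtain ⟨e, he, hx⟩ := hab
  rw [Finset.mem_inter] at he
  exact ⟨e, Finset.mem_inter.mpr ⟨h he.1, he.2⟩, hx⟩

lemma ncomp_pos (W : Finset ℕ) (F : Finset ℕ) (hW : W.Nonempty) :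
    1 ≤ G.ncomp W F := by
  obtain ⟨w, hw⟩ := hW
  rw [ncomp_def]
  haveI : Nonempty (Quot (R G W F)) := ⟨Quot.mk _ ⟨w, hw⟩⟩
  exact Nat.card_pos

lemma ncomp_one_cn {F u v} (h : G.ncomp G.V (F) = 1) (hu : u ∈ G.V) (hv : v ∈ G.V) :
    cn G F u v := by
  rw [cn_iff G hu hv]
  rw [ncomp_def] at h
  haveI := (Nat.card_eq_one_iff_unique.mp h).1
  exact Subsingleton.elim _ _

variable (G : WGraph)

lemma ends_fst_mem {e} (he : e ∈ G.E) : (G.ends e).1 ∈ G.V := (G.ends_mem e he).1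
lemma ends_snd_mem {e} (he : e ∈ G.E) : (G.ends e).2 ∈ G.V := (G.ends_mem e he).2

lemma isBridge_iff {S : Finset ℕ} {e : ℕ} :
    G.IsBridge S e ↔ e ∈ G.E \ S ∧
      ¬ cn G (G.E \ insert e S) (G.ends e).1 (G.ends e).2 := by
  constructor
  · rintro ⟨he, hlt⟩
    refine ⟨he, fun hcn => ?_⟩
    have heE : e ∈ G.E := (Finset.mem_sdiff.mp he).1
    have hu := ends_fst_mem G heE
    have hv := ends_snd_mem G heE
    have heq : G.ncomp G.V (G.E \ S) = G.ncomp G.V (G.E \ insert e S) := by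
      rw [ncomp_def, ncomp_def]
      refine quot_card_eq _ _ ?_ ?_
      · rintro a b ⟨g, hg, hx⟩
        rw [Finset.mem_inter, Finset.mem_sdiff] at hg
        by_cases hge : g = e
        · subst hge
          rcases hx with hx | hx
          · have ha : a = (⟨(G.ends g).1, hu⟩ : {x : ℕ // x ∈ G.V}) :=
              Subtype.ext (show a.1 = (G.ends g).1 by rw [hx])
            have hb : b = (⟨(G.ends g).2, hv⟩ : {x : ℕ // x ∈ G.V}) :=
              Subtype.ext (show b.1 = (G.ends g).2 by rw [hx])
            rw [ha, hb]
            exact (cn_iff G hu hv).mp hcn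
          · have ha : a = (⟨(G.ends g).2, hv⟩ : {x : ℕ // x ∈ G.V}) :=
              Subtype.ext (show a.1 = (G.ends g).2 by rw [hx])
            have hb : b = (⟨(G.ends g).1, hu⟩ : {x : ℕ // x ∈ G.V}) :=
              Subtype.ext (show b.1 = (G.ends g).1 by rw [hx])
            rw [ha, hb]
            exact ((cn_iff G hu hv).mp hcn).symm
        · refine Quot.sound ⟨g, ?_, hx⟩
          rw [Finset.mem_inter, Finset.mem_sdiff, Finset.mem_insert]
          exact ⟨⟨hg.1.1, fun h => h.elim hge hg.1.2⟩, hg.2⟩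
      · rintro a b ⟨g, hg, hx⟩
        rw [Finset.mem_inter, Finset.mem_sdiff, Finset.mem_insert] at hg
        refine Quot.sound ⟨g, ?_, hx⟩
        rw [Finset.mem_inter, Finset.mem_sdiff]
        exact ⟨⟨hg.1.1, fun h => hg.1.2 (Or.inr h)⟩, hg.2⟩
    omega
  · rintro ⟨he, hncn⟩
    have heE : e ∈ G.E := (Finset.mem_sdiff.mp he).1
    have hu := ends_fst_mem G heE
    have hv := ends_snd_mem G heE
    refine ⟨he, ?_⟩
    rw [ncomp_def, ncomp_def]
    refine quot_card_lt _ _ ?_ ⟨(G.ends e).1, hu⟩ ⟨(G.ends e).2, hv⟩ ?_ ?_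
    · rintro a b ⟨g, hg, hx⟩
      rw [Finset.mem_inter, Finset.mem_sdiff, Finset.mem_insert] at hg
      refine Quot.sound ⟨g, ?_, hx⟩
      rw [Finset.mem_inter, Finset.mem_sdiff]
      exact ⟨⟨hg.1.1, fun h => hg.1.2 (Or.inr h)⟩, hg.2⟩
    · refine Quot.sound ⟨e, ?_, Or.inl rfl⟩
      rw [Finset.mem_inter]
      exact ⟨he, heE⟩
    · intro h
      exact hncn ((cn_iff G hu hv).mpr h)

lemma bridge_persist {T S : Finset ℕ} {e : ℕ} (hTS : T ⊆ S) (heS : e ∈ G.E \ S)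
    (h : G.IsBridge T e) : G.IsBridge S e := by
  rw [isBridge_iff] at h ⊢
  refine ⟨heS, fun hcn => h.2 ?_⟩
  refine cn_mono G ?_ hcn
  exact Finset.sdiff_subset_sdiff (le_refl _) (Finset.insert_subset_insert _ hTS)

lemma bridge_trichotomy {F : Finset ℕ} {f x y : ℕ} (hfF : f ∈ F) (hfE : f ∈ G.E)
    (hbr : ¬ cn G (F.erase f) (G.ends f).1 (G.ends f).2)
    (h : cn G F x y) :
    cn G (F.erase f) x y ∨
    (cn G (F.erase f) x (G.ends f).1 ∧ cn G (F.erase f) y (G.ends f).2) ∨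
    (cn G (F.erase f) x (G.ends f).2 ∧ cn G (F.erase f) y (G.ends f).1) := by
  set a := (G.ends f).1 with ha
  set b := (G.ends f).2 with hb
  induction h with
  | rel p q hpq =>
      obtain ⟨g, hg, hx⟩ := hpq
      rw [Finset.mem_inter] at hg
      by_cases hgf : g = f
      · subst hgf
        rcases hx with hx | hx
        · refine Or.inr (Or.inl ⟨?_, ?_⟩)
          · rw [ha, hx]; exact Relation.EqvGen.refl _
          · rw [hb, hx]; exact Relation.EqvGen.refl _
        · refine Or.inr (Or.inr ⟨?_, ?_⟩)
          · rw [hb, hx]; exact Relation.EqvGen.refl _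
          · rw [ha, hx]; exact Relation.EqvGen.refl _
      · exact Or.inl (Relation.EqvGen.rel _ _
          ⟨g, Finset.mem_inter.mpr ⟨Finset.mem_erase.mpr ⟨hgf, hg.1⟩, hg.2⟩, hx⟩)
  | refl p => exact Or.inl (Relation.EqvGen.refl _)
  | symm p q _ ih =>
      rcases ih with h1 | ⟨h1, h2⟩ | ⟨h1, h2⟩
      · exact Or.inl (Relation.EqvGen.symm _ _ h1)
      · exact Or.inr (Or.inr ⟨h2, h1⟩)
      · exact Or.inr (Or.inl ⟨h2, h1⟩)
  | trans p q r _ _ ih1 ih2 =>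
      have sy : ∀ {x y : ℕ}, cn G (F.erase f) x y → cn G (F.erase f) y x :=
        fun h => Relation.EqvGen.symm _ _ h
      have tr : ∀ {x y z : ℕ}, cn G (F.erase f) x y → cn G (F.erase f) y z →
          cn G (F.erase f) x z := fun h h' => Relation.EqvGen.trans _ _ _ h h'
      rcases ih1 with h1 | ⟨h1, h2⟩ | ⟨h1, h2⟩
      · rcases ih2 with h3 | ⟨h3, h4⟩ | ⟨h3, h4⟩
        · exact Or.inl (tr h1 h3)
        · exact Or.inr (Or.inl ⟨tr h1 h3, h4⟩)
        · exact Or.inr (Or.inr ⟨tr h1 h3, h4⟩)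
      · rcases ih2 with h3 | ⟨h3, h4⟩ | ⟨h3, h4⟩
        · exact Or.inr (Or.inl ⟨h1, tr (sy h3) h2⟩)
        · exact absurd (tr (sy h3) h2) hbr
        · exact Or.inl (tr h1 (sy h4))
      · rcases ih2 with h3 | ⟨h3, h4⟩ | ⟨h3, h4⟩
        · exact Or.inr (Or.inr ⟨h1, tr (sy h3) h2⟩)
        · exact Or.inl (tr h1 (sy h4))
        · exact absurd (tr (sy h2) h3) hbr

variable (G : WGraph)

lemma remove_bridges (B : Finset ℕ) :
    ∀ (F : Finset ℕ) (e : ℕ), e ∈ F → e ∈ G.E → e ∉ B →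
      (∀ f ∈ B, f ∈ F ∧ f ∈ G.E ∧ ¬ cn G (F.erase f) (G.ends f).1 (G.ends f).2) →
      cn G (F.erase e) (G.ends e).1 (G.ends e).2 →
      cn G ((F \ B).erase e) (G.ends e).1 (G.ends e).2 := by
  induction B using Finset.induction_on with
  | empty =>
      intro F e h1 h2 h3 h4 h5
      simpa using h5
  | @insert f B hfB ih =>
      intro F e heF heE heB hbrs hcn
      have hef : e ≠ f := fun h => heB (h ▸ Finset.mem_insert_self f B)
      obtain ⟨hfF, hfE, hbrf⟩ := hbrs f (Finset.mem_insert_self f B)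
      -- Step 1: remove f from F.erase e keeping connectivity of ends of e
      have hbr' : ¬ cn G ((F.erase e).erase f) (G.ends f).1 (G.ends f).2 := by
        intro h
        exact hbrf (cn_mono G (Finset.erase_subset_erase f (Finset.erase_subset e F)) h)
      have step1 : cn G ((F.erase e).erase f) (G.ends e).1 (G.ends e).2 := by
        have hfFe : f ∈ F.erase e := Finset.mem_erase.mpr ⟨fun h => hef h.symm, hfF⟩
        rcases bridge_trichotomy G hfFe hfE hbr' hcn with h | ⟨h1, h2⟩ | ⟨h1, h2⟩
        · exact h
        · exfalso
          apply hbrf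
          have hsub : (F.erase e).erase f ⊆ F.erase f :=
            Finset.erase_subset_erase f (Finset.erase_subset e F)
          have hu : cn G (F.erase f) (G.ends f).1 (G.ends e).1 :=
            Relation.EqvGen.symm _ _ (cn_mono G hsub h1)
          have huv : cn G (F.erase f) (G.ends e).1 (G.ends e).2 :=
            Relation.EqvGen.rel _ _ ⟨e, Finset.mem_inter.mpr
              ⟨Finset.mem_erase.mpr ⟨hef, heF⟩, heE⟩, Or.inl rfl⟩
          have hv : cn G (F.erase f) (G.ends e).2 (G.ends f).2 :=
            cn_mono G hsub h2
          exact Relation.EqvGen.trans _ _ _ (Relation.EqvGen.trans _ _ _ hu huv) hv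
        · exfalso
          apply hbrf
          have hsub : (F.erase e).erase f ⊆ F.erase f :=
            Finset.erase_subset_erase f (Finset.erase_subset e F)
          have hu : cn G (F.erase f) (G.ends f).1 (G.ends e).2 :=
            Relation.EqvGen.symm _ _ (cn_mono G hsub h2)
          have huv : cn G (F.erase f) (G.ends e).2 (G.ends e).1 :=
            Relation.EqvGen.rel _ _ ⟨e, Finset.mem_inter.mpr
              ⟨Finset.mem_erase.mpr ⟨hef, heF⟩, heE⟩, Or.inr rfl⟩
          have hv : cn G (F.erase f) (G.ends e).1 (G.ends f).2 :=
            cn_mono G hsub h1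
          exact Relation.EqvGen.trans _ _ _ (Relation.EqvGen.trans _ _ _ hu huv) hv
      -- Step 2: apply induction hypothesis on F.erase f
      have heB' : e ∉ B := fun h => heB (Finset.mem_insert_of_mem h)
      have hres := ih (F.erase f) e (Finset.mem_erase.mpr ⟨hef, heF⟩) heE heB'
        (fun g hg => by
          obtain ⟨hgF, hgE, hbrg⟩ := hbrs g (Finset.mem_insert_of_mem hg)
          have hgf : g ≠ f := fun h => hfB (h ▸ hg)
          refine ⟨Finset.mem_erase.mpr ⟨hgf, hgF⟩, hgE, fun h => hbrg ?_⟩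
          exact cn_mono G (Finset.erase_subset_erase g (Finset.erase_subset f F)) h)
        (by
          have hc : (F.erase f).erase e = (F.erase e).erase f := by
            ext x
            simp only [Finset.mem_erase]
            tauto
          rw [hc]; exact step1)
      have hset : (F.erase f) \ B = F \ insert f B := by
        ext x
        simp only [Finset.mem_sdiff, Finset.mem_erase, Finset.mem_insert]
        tauto
      rwa [hset] at hres

lemma ab0_pull (T : Finset ℕ) :
    ∀ e, ¬ G.IsBridge (T ∪ G.bridges T) e := by
  intro e he
  rw [isBridge_iff] at he
  obtain ⟨hmem, hncn⟩ := he
  rw [Finset.mem_sdiff, Finset.mem_union] at hmem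
  obtain ⟨heE, hnm⟩ := hmem
  have heT : e ∉ T := fun h => hnm (Or.inl h)
  have heBr : e ∉ G.bridges T := fun h => hnm (Or.inr h)
  have hnbr : ¬ G.IsBridge T e := fun h =>
    heBr (Finset.mem_filter.mpr ⟨h.1, h⟩)
  rw [isBridge_iff] at hnbr
  push_neg at hnbr
  have hcn : cn G (G.E \ insert e T) (G.ends e).1 (G.ends e).2 :=
    hnbr (Finset.mem_sdiff.mpr ⟨heE, heT⟩)
  have heq1 : ∀ (g : ℕ), (G.E \ T).erase g = G.E \ insert g T := by
    intro g; ext x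
    simp only [Finset.mem_erase, Finset.mem_sdiff, Finset.mem_insert]
    tauto
  have hres := remove_bridges G (G.bridges T) (G.E \ T) e
    (Finset.mem_sdiff.mpr ⟨heE, heT⟩) heE heBr
    (fun f hf => by
      have hbf : G.IsBridge T f := (Finset.mem_filter.mp hf).2
      have hfm := hbf.1
      rw [isBridge_iff] at hbf
      refine ⟨hfm, (Finset.mem_sdiff.mp hfm).1, ?_⟩
      rw [heq1 f]
      exact hbf.2)
    (by rw [heq1 e]; exact hcn)
  apply hncn
  have hset : ((G.E \ T) \ G.bridges T).erase e = G.E \ insert e (T ∪ G.bridges T) := by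
    ext x
    simp only [Finset.mem_erase, Finset.mem_sdiff, Finset.mem_insert, Finset.mem_union]
    tauto
  rwa [hset] at hres

variable (G : WGraph)

lemma crep_con (S₀ : Finset ℕ) (v : ℕ) :
    Relation.EqvGen (G.conRel S₀) (G.crep S₀ v) v :=
  Nat.sInf_mem (⟨v, Relation.EqvGen.refl v⟩ :
    {u | Relation.EqvGen (G.conRel S₀) u v}.Nonempty)

lemma crep_eq_iff {S₀ : Finset ℕ} {u v : ℕ} :
    G.crep S₀ u = G.crep S₀ v ↔ Relation.EqvGen (G.conRel S₀) u v := by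
  constructor
  · intro h
    have h1 : Relation.EqvGen (G.conRel S₀) u (G.crep S₀ u) :=
      Relation.EqvGen.symm _ _ (crep_con G S₀ u)
    rw [h] at h1
    exact Relation.EqvGen.trans _ _ _ h1 (crep_con G S₀ v)
  · intro h
    unfold WGraph.crep
    congr 1
    ext x
    exact ⟨fun hx => Relation.EqvGen.trans _ _ _ hx h,
      fun hx => Relation.EqvGen.trans _ _ _ hx (Relation.EqvGen.symm _ _ h)⟩

lemma crep_idem (S₀ : Finset ℕ) (v : ℕ) :
    G.crep S₀ (G.crep S₀ v) = G.crep S₀ v :=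
  (crep_eq_iff G).mpr (crep_con G S₀ v)

lemma conRel_mem_V {S₀ : Finset ℕ} {x y : ℕ} (h : G.conRel S₀ x y) :
    x ∈ G.V ∧ y ∈ G.V := by
  obtain ⟨e, he, h⟩ := h
  have hm := G.ends_mem e (Finset.mem_inter.mp he).2
  rcases h with h | h <;> rw [h] at hm
  · exact hm
  · exact ⟨hm.2, hm.1⟩

lemma eqvGen_conRel_mem {S₀ : Finset ℕ} {x y : ℕ}
    (h : Relation.EqvGen (G.conRel S₀) x y) : x = y ∨ (x ∈ G.V ∧ y ∈ G.V) := by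
  induction h with
  | rel a b hab => exact Or.inr (conRel_mem_V G hab)
  | refl a => exact Or.inl rfl
  | symm a b _ ih => rcases ih with rfl | ⟨h1, h2⟩; exacts [Or.inl rfl, Or.inr ⟨h2, h1⟩]
  | trans a b c _ _ ih1 ih2 =>
      rcases ih1 with rfl | ⟨h1, h2⟩
      · exact ih2
      · rcases ih2 with rfl | ⟨h1', h2'⟩
        · exact Or.inr ⟨h1, h2⟩
        · exact Or.inr ⟨h1, h2'⟩

lemma crep_mem_V {S₀ : Finset ℕ} {v : ℕ} (hv : v ∈ G.V) : G.crep S₀ v ∈ G.V := by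
  rcases eqvGen_conRel_mem G (crep_con G S₀ v) with h | h
  · rwa [h]
  · exact h.1

lemma conRel_to_cn {S₀ F : Finset ℕ} (hsub : S₀ ⊆ F) {x y : ℕ}
    (h : Relation.EqvGen (G.conRel S₀) x y) : cn G F x y := by
  refine Relation.EqvGen.mono ?_ _ _ h
  rintro a b ⟨e, he, hx⟩
  rw [Finset.mem_inter] at he
  exact ⟨e, Finset.mem_inter.mpr ⟨hsub he.1, he.2⟩, hx⟩

/-- Key contraction lemma: components of a subgraph of `G/S₀` with edge set `F`
correspond to components of `(V, F ∪ S₀)` in `G`. -/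
lemma ncomp_contract (S₀ : Finset ℕ) (hS₀ : S₀ ⊆ G.E) (F : Finset ℕ) :
    (G.contract S₀).ncomp (G.contract S₀).V F = G.ncomp G.V (F ∪ S₀) := by
  set H := G.contract S₀ with hH
  have hHV : H.V = G.V.image (G.crep S₀) := rfl
  have hHE : H.E = G.E \ S₀ := rfl
  have hVH : ∀ x ∈ H.V, x ∈ G.V := by
    intro x hx
    rw [hHV] at hx
    obtain ⟨z, hz, rfl⟩ := Finset.mem_image.mp hx
    exact crep_mem_V G hz
  -- mk in G is invariant along S₀-identifications
  have key1 : ∀ (x y : ℕ) (hx : x ∈ G.V) (hy : y ∈ G.V),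
      Relation.EqvGen (G.conRel S₀) x y →
      Quot.mk (R G G.V (F ∪ S₀)) ⟨x, hx⟩ = Quot.mk (R G G.V (F ∪ S₀)) ⟨y, hy⟩ := by
    intro x y hx hy h
    exact (cn_iff G hx hy).mp (conRel_to_cn G Finset.subset_union_right h)
  have hcm : ∀ x (hx : x ∈ G.V), G.crep S₀ x ∈ H.V := by
    intro x hx
    rw [hHV]
    exact Finset.mem_image_of_mem _ hx
  -- forward map
  have hphi : ∀ (a b : {x : ℕ // x ∈ G.V}), R G G.V (F ∪ S₀) a b →
      Quot.mk (R H H.V F) ⟨G.crep S₀ a.1, hcm a.1 a.2⟩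
        = Quot.mk (R H H.V F) ⟨G.crep S₀ b.1, hcm b.1 b.2⟩ := by
    rintro a b ⟨g, hg, hx⟩
    rw [Finset.mem_inter, Finset.mem_union] at hg
    by_cases hgS : g ∈ S₀
    · have : G.crep S₀ a.1 = G.crep S₀ b.1 := by
        apply (crep_eq_iff G).mpr
        apply Relation.EqvGen.rel
        exact ⟨g, Finset.mem_inter.mpr ⟨hgS, hg.2⟩, hx⟩
      exact congrArg _ (Subtype.ext this)
    · have hgF : g ∈ F := hg.1.resolve_right hgS
      refine Quot.sound ⟨g, ?_, ?_⟩
      · rw [Finset.mem_inter, hHE, Finset.mem_sdiff]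
        exact ⟨hgF, hg.2, hgS⟩
      · have hends : H.ends g = (G.crep S₀ (G.ends g).1, G.crep S₀ (G.ends g).2) := rfl
        rcases hx with hx | hx
        · left; rw [hends, hx]
        · right; rw [hends, hx]
  -- backward map
  have hVH' : ∀ (a : {x : ℕ // x ∈ H.V}), a.1 ∈ G.V := fun a => hVH a.1 a.2
  have hpsi : ∀ (a b : {x : ℕ // x ∈ H.V}), R H H.V F a b →
      Quot.mk (R G G.V (F ∪ S₀)) ⟨a.1, hVH' a⟩
        = Quot.mk (R G G.V (F ∪ S₀)) ⟨b.1, hVH' b⟩ := by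
    rintro a b ⟨g, hg, hx⟩
    rw [Finset.mem_inter, hHE, Finset.mem_sdiff] at hg
    have hgE : g ∈ G.E := hg.2.1
    have hp := (G.ends_mem g hgE).1
    have hq := (G.ends_mem g hgE).2
    have hends : H.ends g = (G.crep S₀ (G.ends g).1, G.crep S₀ (G.ends g).2) := rfl
    have hpq : Quot.mk (R G G.V (F ∪ S₀)) ⟨(G.ends g).1, hp⟩
        = Quot.mk (R G G.V (F ∪ S₀)) ⟨(G.ends g).2, hq⟩ :=
      Quot.sound ⟨g, Finset.mem_inter.mpr
        ⟨Finset.mem_union.mpr (Or.inl hg.1), hgE⟩, Or.inl rfl⟩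
    have hstep : ∀ (z : ℕ) (hz : z ∈ G.V) (c : {x : ℕ // x ∈ H.V}),
        c.1 = G.crep S₀ z →
        Quot.mk (R G G.V (F ∪ S₀)) ⟨c.1, hVH' c⟩
          = Quot.mk (R G G.V (F ∪ S₀)) ⟨z, hz⟩ := by
      intro z hz c hc
      apply key1
      have : Relation.EqvGen (G.conRel S₀) (G.crep S₀ z) z := crep_con G S₀ z
      rw [← hc] at this
      exact this
    rw [hends] at hx
    rcases hx with hx | hx
    · have ha : a.1 = G.crep S₀ (G.ends g).1 := ((Prod.ext_iff.mp hx).1).symm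
      have hb : b.1 = G.crep S₀ (G.ends g).2 := ((Prod.ext_iff.mp hx).2).symm
      rw [hstep _ hp a ha, hstep _ hq b hb, hpq]
    · have ha : a.1 = G.crep S₀ (G.ends g).2 := ((Prod.ext_iff.mp hx).2).symm
      have hb : b.1 = G.crep S₀ (G.ends g).1 := ((Prod.ext_iff.mp hx).1).symm
      rw [hstep _ hq a ha, hstep _ hp b hb, hpq]
  -- build the equivalence
  have hequiv : Quot (R G G.V (F ∪ S₀)) ≃ Quot (R H H.V F) := by
    refine ⟨Quot.lift (fun a => Quot.mk (R H H.V F) ⟨G.crep S₀ a.1, hcm a.1 a.2⟩) hphi,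
      Quot.lift (fun a => Quot.mk (R G G.V (F ∪ S₀)) ⟨a.1, hVH' a⟩) hpsi, ?_, ?_⟩
    · intro q
      induction q using Quot.ind with
      | _ a => exact key1 _ _ (crep_mem_V G a.2) a.2 (crep_con G S₀ a.1)
    · intro q
      induction q using Quot.ind with
      | _ a =>
        have ha : G.crep S₀ a.1 = a.1 := by
          obtain ⟨z, hz, hza⟩ := Finset.mem_image.mp
            (show a.1 ∈ G.V.image (G.crep S₀) from a.2)
          rw [← hza, crep_idem]
        exact congrArg _ (Subtype.ext ha)
  rw [ncomp_def, ncomp_def]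
  exact (Nat.card_congr hequiv).symm

variable (G : WGraph)

lemma ab0_elim {S : Finset ℕ} (h : G.Ab 0 S) :
    S ⊆ G.E ∧ ∀ e, ¬ G.IsBridge S e := by
  refine ⟨h.1, ?_⟩
  rcases h.2 with ⟨_, h⟩ | ⟨h, _⟩
  · exact h
  · exact absurd h (by norm_num)

lemma ab1_elim {S : Finset ℕ} (h : G.Ab 1 S) :
    S ⊆ G.E ∧ G.ConnSub G.V (G.E \ S) := by
  refine ⟨h.1, ?_⟩
  rcases h.2 with ⟨h, _⟩ | ⟨_, h⟩
  · exact absurd h (by norm_num)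
  · exact h

lemma pullStar_zero (T : Finset ℕ) : G.pullStar 0 T = T ∪ G.bridges T := by
  simp [WGraph.pullStar]

lemma pullStar_one (T : Finset ℕ) : G.pullStar 1 T = T := by
  simp [WGraph.pullStar]

lemma bridges_subset_E (T : Finset ℕ) : G.bridges T ⊆ G.E := fun x hx =>
  (Finset.mem_sdiff.mp (Finset.mem_filter.mp hx).1).1

lemma ncomp_push (S₀ : Finset ℕ) (hS₀ : S₀ ⊆ G.E) {T' : Finset ℕ}
    (hd : ∀ x ∈ T', x ∉ S₀) :
    (G.contract S₀).ncomp (G.contract S₀).V ((G.contract S₀).E \ T')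
      = G.ncomp G.V (G.E \ T') := by
  rw [ncomp_contract G S₀ hS₀]
  have hset : ((G.contract S₀).E \ T') ∪ S₀ = G.E \ T' := by
    show ((G.E \ S₀) \ T') ∪ S₀ = G.E \ T'
    ext x
    simp only [Finset.mem_union, Finset.mem_sdiff]
    constructor
    · rintro (⟨⟨h1, h2⟩, h3⟩ | h)
      · exact ⟨h1, h3⟩
      · exact ⟨hS₀ h, fun hx => hd x hx h⟩
    · rintro ⟨h1, h2⟩
      by_cases hx : x ∈ S₀
      · exact Or.inr hx
      · exact Or.inl ⟨⟨h1, hx⟩, h2⟩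
  rw [hset]

lemma isBridge_contract' (S₀ : Finset ℕ) (hS₀ : S₀ ⊆ G.E) {T' : Finset ℕ} {e : ℕ}
    (hd : ∀ x ∈ T', x ∉ S₀) (he : e ∉ S₀) :
    (G.contract S₀).IsBridge T' e ↔ G.IsBridge T' e := by
  have hd' : ∀ x ∈ insert e T', x ∉ S₀ := by
    intro x hx
    rcases Finset.mem_insert.mp hx with rfl | hx
    · exact he
    · exact hd x hx
  unfold WGraph.IsBridge
  rw [ncomp_push G S₀ hS₀ hd, ncomp_push G S₀ hS₀ hd']
  have hmem : e ∈ (G.contract S₀).E \ T' ↔ e ∈ G.E \ T' := by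
    show e ∈ (G.E \ S₀) \ T' ↔ _
    simp only [Finset.mem_sdiff]
    tauto
  rw [hmem]

lemma W_nonempty_of_ncomp_one {W F : Finset ℕ} (h : G.ncomp W F = 1) : W.Nonempty := by
  rw [ncomp_def] at h
  obtain ⟨q⟩ := (Nat.card_eq_one_iff_unique.mp h).2
  obtain ⟨a, -⟩ := Quot.exists_rep q
  exact ⟨a.1, a.2⟩

/-- Pushforward preserves `A^b`. -/
lemma push_Ab (b : ℕ) (hb : b = 0 ∨ b = 1) (S₀ : Finset ℕ) (hS₀ : S₀ ⊆ G.E)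
    {S : Finset ℕ} (hS : G.Ab b S) : (G.contract S₀).Ab b (S \ S₀) := by
  have hd : ∀ x ∈ S \ S₀, x ∉ S₀ := fun x hx => (Finset.mem_sdiff.mp hx).2
  have hsub : S \ S₀ ⊆ (G.contract S₀).E :=
    Finset.sdiff_subset_sdiff hS.1 (le_refl _)
  rcases hb with rfl | rfl
  · obtain ⟨hSE, hnb⟩ := ab0_elim G hS
    refine ⟨hsub, Or.inl ⟨rfl, fun e he => ?_⟩⟩
    have heE : e ∈ (G.contract S₀).E \ (S \ S₀) := he.1
    have he' : e ∉ S₀ := by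
      have : e ∈ (G.E \ S₀) \ (S \ S₀) := heE
      rw [Finset.mem_sdiff, Finset.mem_sdiff] at this
      exact this.1.2
    have hbr : G.IsBridge (S \ S₀) e := (isBridge_contract' G S₀ hS₀ hd he').mp he
    have heS : e ∈ G.E \ S := by
      have : e ∈ (G.E \ S₀) \ (S \ S₀) := heE
      simp only [Finset.mem_sdiff] at this ⊢
      exact ⟨this.1.1, fun hx => this.2 ⟨hx, this.1.2⟩⟩
    exact hnb e (bridge_persist G Finset.sdiff_subset heS hbr)
  · obtain ⟨hSE, hconn⟩ := ab1_elim G hS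
    refine ⟨hsub, Or.inr ⟨rfl, ?_⟩⟩
    show (G.contract S₀).ncomp _ _ = 1
    rw [ncomp_push G S₀ hS₀ hd]
    have hle : G.ncomp G.V (G.E \ (S \ S₀)) ≤ 1 := by
      have := ncomp_mono G G.V
        (show G.E \ S ⊆ G.E \ (S \ S₀) from
          Finset.sdiff_subset_sdiff (le_refl _) Finset.sdiff_subset)
      rw [hconn] at this
      exact this
    have hge : 1 ≤ G.ncomp G.V (G.E \ (S \ S₀)) :=
      ncomp_pos G _ _ (W_nonempty_of_ncomp_one G hconn)
    omega

/-- `γ_* γ* T = T`. -/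
lemma pull_eq (b : ℕ) (hb : b = 0 ∨ b = 1) (S₀ : Finset ℕ) (hS₀ : S₀ ⊆ G.E)
    {T : Finset ℕ} (hT : (G.contract S₀).Ab b T) : G.pullStar b T \ S₀ = T := by
  have hTE : T ⊆ G.E \ S₀ := hT.1
  have hdisj : ∀ x ∈ T, x ∉ S₀ := fun x hx => (Finset.mem_sdiff.mp (hTE hx)).2
  rcases hb with rfl | rfl
  · obtain ⟨_, hnb⟩ := ab0_elim (G.contract S₀) hT
    rw [pullStar_zero]
    ext x
    simp only [Finset.mem_sdiff, Finset.mem_union]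
    constructor
    · rintro ⟨hx | hx, hxS₀⟩
      · exact hx
      · -- x is a bridge of G − T not in S₀: transfer to a bridge of H − T
        exfalso
        have hbx : G.IsBridge T x := (Finset.mem_filter.mp hx).2
        exact hnb x ((isBridge_contract' G S₀ hS₀ hdisj hxS₀).mpr hbx)
    · intro hx
      exact ⟨Or.inl hx, hdisj x hx⟩
  · rw [pullStar_one]
    ext x
    simp only [Finset.mem_sdiff]
    exact ⟨fun h => h.1, fun h => ⟨h, hdisj x h⟩⟩

/-- `γ* T ∈ A^b_G`. -/
lemma pull_Ab (b : ℕ) (hb : b = 0 ∨ b = 1) (S₀ : Finset ℕ) (hS₀ : S₀ ⊆ G.E)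
    {T : Finset ℕ} (hT : (G.contract S₀).Ab b T) : G.Ab b (G.pullStar b T) := by
  have hTE : T ⊆ G.E := fun x hx => (Finset.mem_sdiff.mp (hT.1 hx)).1
  have hdisj : ∀ x ∈ T, x ∉ S₀ := fun x hx => (Finset.mem_sdiff.mp (hT.1 hx)).2
  rcases hb with rfl | rfl
  · rw [pullStar_zero]
    refine ⟨Finset.union_subset hTE (bridges_subset_E G T), Or.inl ⟨rfl, ab0_pull G T⟩⟩
  · rw [pullStar_one]
    obtain ⟨_, hconn⟩ := ab1_elim (G.contract S₀) hT
    refine ⟨hTE, Or.inr ⟨rfl, ?_⟩⟩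
    show G.ncomp G.V (G.E \ T) = 1
    rw [← ncomp_push G S₀ hS₀ hdisj]
    exact hconn

/-- `γ* T` is ≤ any `S' ∈ A^b_G` containing `T`. -/
lemma pull_min (b : ℕ) (hb : b = 0 ∨ b = 1) {T S' : Finset ℕ}
    (hS' : G.Ab b S') (hTS : T ⊆ S') : G.pullStar b T ⊆ S' := by
  rcases hb with rfl | rfl
  · rw [pullStar_zero]
    obtain ⟨hSE, hnb⟩ := ab0_elim G hS'
    refine Finset.union_subset hTS fun e he => ?_
    by_contra heS
    have hbe : G.IsBridge T e := (Finset.mem_filter.mp he).2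
    have heE : e ∈ G.E \ S' :=
      Finset.mem_sdiff.mpr ⟨bridges_subset_E G T he, heS⟩
    exact hnb e (bridge_persist G hTS heE hbe)
  · rw [pullStar_one]; exact hTS

/-- In the bridge case: all bridges of `G` belong to every `S ∈ A⁰_G`. -/
lemma bridges_empty_subset {S' : Finset ℕ} (hS' : G.Ab 0 S') : G.bridges ∅ ⊆ S' := by
  obtain ⟨hSE, hnb⟩ := ab0_elim G hS'
  intro f hf
  by_contra hfS
  have hbf : G.IsBridge ∅ f := (Finset.mem_filter.mp hf).2
  have hfE : f ∈ G.E \ S' :=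
    Finset.mem_sdiff.mpr ⟨(Finset.mem_sdiff.mp hbf.1).1, hfS⟩
  exact hnb f (bridge_persist G (Finset.empty_subset _) hfE hbf)

/-- In the bridge case with `b = 1`: `S` avoids all bridges of `G`. -/
lemma ab1_avoids_bridges {S' : Finset ℕ} (hS' : G.Ab 1 S') {e : ℕ}
    (heS : e ∈ S') (hbe : e ∈ G.bridges ∅) : False := by
  obtain ⟨hSE, hconn⟩ := ab1_elim G hS'
  have hbr : G.IsBridge ∅ e := (Finset.mem_filter.mp hbe).2
  have heE : e ∈ G.E := (Finset.mem_sdiff.mp hbr.1).1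
  rw [isBridge_iff] at hbr
  refine hbr.2 ?_
  have hcn : cn G (G.E \ S') (G.ends e).1 (G.ends e).2 :=
    ncomp_one_cn G hconn (ends_fst_mem G heE) (ends_snd_mem G heE)
  refine cn_mono G ?_ hcn
  refine Finset.sdiff_subset_sdiff (le_refl _) ?_
  intro x hx
  rcases Finset.mem_insert.mp hx with rfl | hx
  · exact heS
  · exact absurd hx (Finset.notMem_empty x)

end Pf

/-- For a contraction `γ : G → H = G/S₀`, `S ∈ A^b_G`,
`T ∈ A^b_H`: (a) `γ_* γ* T = T`; (b) `T ⊆ γ_* S ↔ γ* T ⊆ S`; (c) `γ* T` is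
the smallest element of `A^b_G` pushing forward to `T`; (d) `γ_*` is a
quotient of posets; (e) if `S₀ ⊆ G_br` then `γ_*` is an isomorphism of
posets. -/
theorem pushforward_pullback_adjunction (G : WGraph) (b : ℕ) (hb : b = 0 ∨ b = 1)
    (S₀ : Finset ℕ) (hS₀ : S₀ ⊆ G.E)
    (S : Finset ℕ) (hS : G.Ab b S) (T : Finset ℕ) (hT : (G.contract S₀).Ab b T) :
    (G.pullStar b T \ S₀ = T) ∧
    (T ⊆ S \ S₀ ↔ G.pullStar b T ⊆ S) ∧
    (G.Ab b (G.pullStar b T) ∧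
      ∀ S', G.Ab b S' → S' \ S₀ = T → G.pullStar b T ⊆ S') ∧
    IsPosetQuotient (G.Ab b) ((G.contract S₀).Ab b)
      (fun S₁ S₂ => S₂ ⊆ S₁) (fun T₁ T₂ => T₂ ⊆ T₁) (fun S₁ => S₁ \ S₀) ∧
    (S₀ ⊆ G.bridges ∅ →
      (∀ T', (G.contract S₀).Ab b T' → ∃! S', G.Ab b S' ∧ S' \ S₀ = T') ∧
      (∀ S' S'', G.Ab b S' → G.Ab b S'' → (S'' ⊆ S' ↔ S'' \ S₀ ⊆ S' \ S₀))) := by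
  have hTEH : T ⊆ (G.contract S₀).E := hT.1
  have hTdisj : ∀ x ∈ T, x ∉ S₀ := fun x hx => (Finset.mem_sdiff.mp (hTEH hx)).2
  have hsubpull : ∀ T' : Finset ℕ, T' ⊆ G.pullStar b T' := by
    intro T'
    rcases hb with rfl | rfl
    · rw [Pf.pullStar_zero]; exact Finset.subset_union_left
    · rw [Pf.pullStar_one]
  refine ⟨Pf.pull_eq G b hb S₀ hS₀ hT, ?_, ⟨Pf.pull_Ab G b hb S₀ hS₀ hT, ?_⟩, ?_, ?_⟩
  · -- (b) adjunction
    constructor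
    · intro h
      exact Pf.pull_min G b hb hS (h.trans Finset.sdiff_subset)
    · intro h x hx
      exact Finset.mem_sdiff.mpr ⟨h (hsubpull T hx), hTdisj x hx⟩
  · -- (c) minimality
    intro S' hS' hS'T
    refine Pf.pull_min G b hb hS' ?_
    rw [← hS'T]
    exact Finset.sdiff_subset
  · -- (d) poset quotient
    refine ⟨fun S₁ h => Pf.push_Ab G b hb S₀ hS₀ h,
      fun S₁ S₂ _ _ h => Finset.sdiff_subset_sdiff h (le_refl _),
      fun T₁ h => ⟨G.pullStar b T₁, Pf.pull_Ab G b hb S₀ hS₀ h, Pf.pull_eq G b hb S₀ hS₀ h⟩,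
      ?_⟩
    intro T₁ T₂ h1 h2 hle
    exact ⟨G.pullStar b T₁, G.pullStar b T₂, Pf.pull_Ab G b hb S₀ hS₀ h1,
      Pf.pull_Ab G b hb S₀ hS₀ h2, Pf.pull_eq G b hb S₀ hS₀ h1,
      Pf.pull_eq G b hb S₀ hS₀ h2,
      Pf.pull_min G b hb (Pf.pull_Ab G b hb S₀ hS₀ h1) (hle.trans (hsubpull T₁))⟩
  · -- (e) the bridge case
    intro hbr
    have hb0 : ∀ S' : Finset ℕ, G.Ab 0 S' → S₀ ⊆ S' := fun S' h =>
      hbr.trans (Pf.bridges_empty_subset G h)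
    have hb1 : ∀ S' : Finset ℕ, G.Ab 1 S' → ∀ x ∈ S', x ∉ S₀ :=
      fun S' h x hx hxS₀ => Pf.ab1_avoids_bridges G h hx (hbr hxS₀)
    constructor
    · intro T' hT'
      refine ⟨G.pullStar b T', ⟨Pf.pull_Ab G b hb S₀ hS₀ hT', Pf.pull_eq G b hb S₀ hS₀ hT'⟩, ?_⟩
      rintro S' ⟨hS'a, hS'e⟩
      have hmin : G.pullStar b T' ⊆ S' := by
        refine Pf.pull_min G b hb hS'a ?_
        rw [← hS'e]
        exact Finset.sdiff_subset
      refine Finset.Subset.antisymm ?_ hmin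
      intro x hx
      by_cases hxS₀ : x ∈ S₀
      · rcases hb with rfl | rfl
        · exact hb0 _ (Pf.pull_Ab G 0 (Or.inl rfl) S₀ hS₀ hT') hxS₀
        · exact absurd hxS₀ (hb1 S' hS'a x hx)
      · have hxT : x ∈ T' := by
          rw [← hS'e]
          exact Finset.mem_sdiff.mpr ⟨hx, hxS₀⟩
        exact hsubpull T' hxT
    · intro S' S'' h' h''
      refine ⟨fun h => Finset.sdiff_subset_sdiff h (le_refl _), fun h x hx => ?_⟩
      by_cases hxS₀ : x ∈ S₀
      · rcases hb with rfl | rfl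
        · exact hb0 S' h' hxS₀
        · exact absurd hxS₀ (hb1 S'' h'' x hx)
      · have : x ∈ S' \ S₀ := h (Finset.mem_sdiff.mpr ⟨hx, hxS₀⟩)
        exact (Finset.mem_sdiff.mp this).1
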